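/- Let H be a complex Hilbert space and A, B bounded selfadjoint operators on H. If A maps the set C_B = {x ∈ H : ⟨Bx, x⟩ = 0} into nonnegative values (i.e. ⟨Ax, x⟩ ≥ 0 for all x with ⟨Bx, x⟩ = 0) and B is indefinite (there exist x₊, x₋ with ⟨Bx₊, x₊⟩ > 0 and ⟨Bx₋, x₋⟩ < 0), then there exists a real number ρ such that A + ρB is positive semidefinite. -/

import Mathlib

open scoped InnerProductSpace
open Complex

lemma farkas_phase_exists (α β : ℂ) :
    ∃ μ : ℂ, ‖μ‖ = 1 ∧ (μ * β).re = 0 ∧ (μ * α).re ≤ 0 := by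
  by_cases hβ : β = 0
  · by_cases hα : α = 0
    · exact ⟨1, by simp, by simp [hβ], by simp [hα]⟩
    · refine ⟨-(starRingEnd ℂ α) / ‖α‖, ?_, by simp [hβ], ?_⟩
      · rw [norm_div, norm_neg, RCLike.norm_conj, Complex.norm_real, norm_norm,
          div_self (norm_ne_zero_iff.mpr hα)]
      · have h1 : (-(starRingEnd ℂ α) / ‖α‖) * α = -((Complex.normSq α / ‖α‖ : ℝ) : ℂ) := by
          rw [div_mul_eq_mul_div, neg_mul, mul_comm, Complex.mul_conj]
          push_cast
          ring
        rw [h1]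
        simp only [Complex.neg_re, Complex.ofReal_re, neg_nonpos]
        exact div_nonneg (Complex.normSq_nonneg α) (norm_nonneg α)
  · have hb : ((‖β‖ : ℝ) : ℂ) ≠ 0 := by
      simpa using norm_ne_zero_iff.mpr hβ
    set μ₀ : ℂ := Complex.I * starRingEnd ℂ β / ‖β‖ with hμ₀
    have hnorm : ‖μ₀‖ = 1 := by
      rw [hμ₀, norm_div, norm_mul, Complex.norm_I, one_mul, RCLike.norm_conj,
        Complex.norm_real, norm_norm, div_self (norm_ne_zero_iff.mpr hβ)]
    have hre : (μ₀ * β).re = 0 := by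
      have : μ₀ * β = Complex.I * ((Complex.normSq β / ‖β‖ : ℝ) : ℂ) := by
        rw [hμ₀, div_mul_eq_mul_div, mul_assoc, mul_comm (starRingEnd ℂ β) β,
          Complex.mul_conj]
        push_cast
        ring
      rw [this]
      simp
    rcases le_or_gt ((μ₀ * α).re) 0 with h | h
    · exact ⟨μ₀, hnorm, hre, h⟩
    · refine ⟨-μ₀, by simpa using hnorm, by simp [hre], ?_⟩
      simp only [neg_mul, Complex.neg_re, neg_nonpos]
      exact h.le

section Aux
variable {H : Type*} [NormedAddCommGroup H] [InnerProductSpace ℂ H] [CompleteSpace H]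

lemma farkas_symm {T : H →L[ℂ] H} (hT : IsSelfAdjoint T) (u v : H) :
    ⟪T v, u⟫_ℂ = starRingEnd ℂ ⟪T u, v⟫_ℂ := by
  have hs := (ContinuousLinearMap.isSelfAdjoint_iff_isSymmetric.mp hT)
  exact (hs v u).trans (inner_conj_symm v (T u)).symm

lemma farkas_real {T : H →L[ℂ] H} (hT : IsSelfAdjoint T) (w : H) :
    (⟪T w, w⟫_ℂ).im = 0 := by
  have := farkas_symm hT w w
  rw [← Complex.conj_eq_iff_im]
  exact this.symm

lemma farkas_expand {T : H →L[ℂ] H} (hT : IsSelfAdjoint T) (x y : H) (c s : ℝ) (μ : ℂ)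
    (hμ : ‖μ‖ = 1) :
    (⟪T ((c : ℂ) • x + ((s : ℂ) * μ) • y), (c : ℂ) • x + ((s : ℂ) * μ) • y⟫_ℂ).re
      = c ^ 2 * (⟪T x, x⟫_ℂ).re + s ^ 2 * (⟪T y, y⟫_ℂ).re
        + 2 * c * s * (μ * ⟪T x, y⟫_ℂ).re := by
  have hcross : ⟪T y, x⟫_ℂ = starRingEnd ℂ ⟪T x, y⟫_ℂ := farkas_symm hT x y
  have hμ2 : (starRingEnd ℂ μ) * μ = 1 := by
    rw [mul_comm, Complex.mul_conj]
    norm_cast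
    rw [Complex.normSq_eq_norm_sq, hμ, one_pow]
  simp only [map_add, map_smul, inner_add_left, inner_add_right, inner_smul_left,
    inner_smul_right, hcross]
  simp only [map_mul, Complex.conj_ofReal]
  ring_nf
  rw [show ((c:ℂ) * s * (starRingEnd ℂ) μ * (starRingEnd ℂ) ⟪T x, y⟫_ℂ)
        = ((c*s : ℝ) : ℂ) * (starRingEnd ℂ) (μ * ⟪T x, y⟫_ℂ) from by
      rw [map_mul]; push_cast; ring,
    show ((c:ℂ) * s * μ * ⟪T x, y⟫_ℂ) = ((c*s:ℝ):ℂ) * (μ * ⟪T x, y⟫_ℂ) from by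
      push_cast; ring,
    show ((c:ℂ)^2 * ⟪T x, x⟫_ℂ) = ((c^2 : ℝ):ℂ) * ⟪T x, x⟫_ℂ from by push_cast; ring,
    show ((s:ℂ)^2 * (starRingEnd ℂ) μ * μ * ⟪T y, y⟫_ℂ) = ((s^2:ℝ):ℂ) * ⟪T y, y⟫_ℂ from by
      rw [mul_assoc ((s:ℂ)^2), hμ2, mul_one]; push_cast; ring]
  simp only [Complex.add_re, Complex.re_ofReal_mul, Complex.conj_re]
  ring

end Aux

lemma farkas_pairwise {H : Type*} [NormedAddCommGroup H] [InnerProductSpace ℂ H]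
    [CompleteSpace H] {A B : H →L[ℂ] H} (hA : IsSelfAdjoint A) (hB : IsSelfAdjoint B)
    (hmap : ∀ x : H, ⟪B x, x⟫_ℂ = 0 → 0 ≤ (⟪A x, x⟫_ℂ).re)
    {x y : H} (hx : 0 < (⟪B x, x⟫_ℂ).re) (hy : (⟪B y, y⟫_ℂ).re < 0) :
    (⟪A x, x⟫_ℂ).re * (⟪B y, y⟫_ℂ).re ≤ (⟪A y, y⟫_ℂ).re * (⟪B x, x⟫_ℂ).re := by
  obtain ⟨μ, hμ, hμB, hμA⟩ := farkas_phase_exists ⟪A x, y⟫_ℂ ⟪B x, y⟫_ℂ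
  set c := Real.sqrt (-(⟪B y, y⟫_ℂ).re) with hc
  set s := Real.sqrt ((⟪B x, x⟫_ℂ).re) with hs
  have hc2 : c ^ 2 = -(⟪B y, y⟫_ℂ).re := Real.sq_sqrt (by linarith)
  have hs2 : s ^ 2 = (⟪B x, x⟫_ℂ).re := Real.sq_sqrt hx.le
  have hcpos : 0 < c := Real.sqrt_pos.mpr (by linarith)
  have hspos : 0 < s := Real.sqrt_pos.mpr hx
  set z := (c : ℂ) • x + ((s : ℂ) * μ) • y with hz
  have hBz : (⟪B z, z⟫_ℂ).re = 0 := by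
    rw [hz, farkas_expand hB x y c s μ hμ, hc2, hs2, hμB]; ring
  have hBz0 : ⟪B z, z⟫_ℂ = 0 := by
    apply Complex.ext <;> simp [hBz, farkas_real hB z]
  have hAz := hmap z hBz0
  rw [hz, farkas_expand hA x y c s μ hμ, hc2, hs2] at hAz
  nlinarith [mul_pos hcpos hspos, hμA]

/-- S-lemma for selfadjoint operators on a complex Hilbert space (Proposition 2.1). -/
theorem farkas_operator_version
    {H : Type*} [NormedAddCommGroup H] [InnerProductSpace ℂ H] [CompleteSpace H]
    (A B : H →L[ℂ] H) (hA : IsSelfAdjoint A) (hB : IsSelfAdjoint B)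
    (hmap : ∀ x : H, ⟪B x, x⟫_ℂ = 0 → 0 ≤ (⟪A x, x⟫_ℂ).re)
    (hBpos : ∃ x : H, 0 < (⟪B x, x⟫_ℂ).re)
    (hBneg : ∃ x : H, (⟪B x, x⟫_ℂ).re < 0) :
    ∃ ρ : ℝ, ∀ x : H, 0 ≤ (⟪(A + (ρ : ℂ) • B) x, x⟫_ℂ).re := by
  obtain ⟨x₀, hx₀⟩ := hBpos
  obtain ⟨y₀, hy₀⟩ := hBneg
  set S : Set ℝ :=
    {r | ∃ x : H, 0 < (⟪B x, x⟫_ℂ).re ∧ r = -(⟪A x, x⟫_ℂ).re / (⟪B x, x⟫_ℂ).re} with hS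
  have hSne : S.Nonempty := ⟨_, x₀, hx₀, rfl⟩
  have hub : ∀ r ∈ S, ∀ y : H, (⟪B y, y⟫_ℂ).re < 0 →
      r ≤ -(⟪A y, y⟫_ℂ).re / (⟪B y, y⟫_ℂ).re := by
    rintro r ⟨x, hx, rfl⟩ y hy
    have key := farkas_pairwise hA hB hmap hx hy
    have h1 : -(⟪A x, x⟫_ℂ).re / (⟪B x, x⟫_ℂ).re
        ≤ (⟪A y, y⟫_ℂ).re / (-(⟪B y, y⟫_ℂ).re) := by
      rw [div_le_div_iff₀ hx (by linarith)]
      nlinarith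
    calc -(⟪A x, x⟫_ℂ).re / (⟪B x, x⟫_ℂ).re
        ≤ (⟪A y, y⟫_ℂ).re / (-(⟪B y, y⟫_ℂ).re) := h1
      _ = -(⟪A y, y⟫_ℂ).re / (⟪B y, y⟫_ℂ).re := by rw [div_neg, neg_div]
  have hbdd : BddAbove S :=
    ⟨-(⟪A y₀, y₀⟫_ℂ).re / (⟪B y₀, y₀⟫_ℂ).re, fun r hr => hub r hr y₀ hy₀⟩
  refine ⟨sSup S, fun x => ?_⟩
  have hval : (⟪(A + ((sSup S : ℝ) : ℂ) • B) x, x⟫_ℂ).re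
      = (⟪A x, x⟫_ℂ).re + (sSup S) * (⟪B x, x⟫_ℂ).re := by
    have e1 : (A + ((sSup S : ℝ) : ℂ) • B) x = A x + ((sSup S : ℝ) : ℂ) • (B x) := rfl
    rw [e1, inner_add_left, inner_smul_left, Complex.add_re, Complex.conj_ofReal,
      Complex.re_ofReal_mul]
  rw [hval]
  rcases lt_trichotomy ((⟪B x, x⟫_ℂ).re) 0 with h | h | h
  · have hle : sSup S ≤ -(⟪A x, x⟫_ℂ).re / (⟪B x, x⟫_ℂ).re :=
      csSup_le hSne (fun r hr => hub r hr x h)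
    have h1 : (-(⟪A x, x⟫_ℂ).re / (⟪B x, x⟫_ℂ).re) * (⟪B x, x⟫_ℂ).re
        = -(⟪A x, x⟫_ℂ).re := div_mul_cancel₀ _ (ne_of_lt h)
    nlinarith [mul_le_mul_of_nonpos_right hle (le_of_lt h)]
  · have hz : ⟪B x, x⟫_ℂ = 0 := by
      apply Complex.ext <;> simp [h, farkas_real hB x]
    have := hmap x hz
    rw [h]
    linarith
  · have hmem : -(⟪A x, x⟫_ℂ).re / (⟪B x, x⟫_ℂ).re ∈ S := ⟨x, h, rfl⟩
    have hle := le_csSup hbdd hmem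
    have h1 : (-(⟪A x, x⟫_ℂ).re / (⟪B x, x⟫_ℂ).re) * (⟪B x, x⟫_ℂ).re
        = -(⟪A x, x⟫_ℂ).re := div_mul_cancel₀ _ (ne_of_gt h)
    nlinarith [mul_le_mul_of_nonneg_right hle h.le]
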